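/- For any finite simple graph G on n ≥ 2 vertices and any integer k ≥ 2, the k-coalition number satisfies C_k(G) ≥ δ(G) − k + 3, where δ(G) is the minimum degree of G. -/

import Mathlib

open SimpleGraph

/-- A set `S` is a `k`-dominating set of `G` if every vertex outside `S`
has at least `k` neighbors in `S`. -/
def KDominatingSet {V : Type*} (G : SimpleGraph V) (k : ℕ) (S : Set V) : Prop :=
  ∀ v ∉ S, k ≤ (S ∩ G.neighborSet v).ncard

/-- Two disjoint sets `A` and `B` form a `k`-coalition in `G` if neither is a
`k`-dominating set of `G` but their union is. -/
def KCoalition {V : Type*} (G : SimpleGraph V) (k : ℕ) (A B : Set V) : Prop :=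
  Disjoint A B ∧ ¬ KDominatingSet G k A ∧ ¬ KDominatingSet G k B ∧
    KDominatingSet G k (A ∪ B)

/-- A `k`-coalition partition of `G` is a partition of the vertex set in which every
part is either a `k`-dominating set of cardinality `k` or forms a `k`-coalition with
another part. -/
def KCoalitionPartition {V : Type*} (G : SimpleGraph V) (k : ℕ) (P : Finset (Set V)) : Prop :=
  (∀ A ∈ P, A.Nonempty) ∧
  (P : Set (Set V)).PairwiseDisjoint id ∧
  (⋃ A ∈ P, A) = (Set.univ : Set V) ∧
  ∀ A ∈ P, (KDominatingSet G k A ∧ A.ncard = k) ∨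
    ∃ B ∈ P, B ≠ A ∧ KCoalition G k A B

/-- The `k`-coalition number of `G`: the maximum cardinality of a
`k`-coalition partition of `G`. -/
noncomputable def kCoalitionNumber {V : Type*} (G : SimpleGraph V) (k : ℕ) : ℕ :=
  sSup {n | ∃ P : Finset (Set V), KCoalitionPartition G k P ∧ P.card = n}

lemma not_kdom_small {V : Type*} [Fintype V] (G : SimpleGraph V) {k : ℕ} (hk : 2 ≤ k)
    (u : V) (hn : 2 ≤ Fintype.card V) : ¬ KDominatingSet G k {u} := by
  obtain ⟨w, hw⟩ := Fintype.exists_ne_of_one_lt_card (by omega) u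
  intro hd
  have h1 := hd w (by simp [hw])
  have h2 : (({u} : Set V) ∩ G.neighborSet w).ncard ≤ ({u} : Set V).ncard :=
    Set.ncard_le_ncard Set.inter_subset_left (Set.toFinite _)
  rw [Set.ncard_singleton] at h2
  omega

lemma kdom_compl {V : Type*} [Fintype V] [DecidableEq V] (G : SimpleGraph V) [DecidableRel G.Adj]
    {k : ℕ} (C : Finset V) (h : ∀ u ∈ C, k + C.card ≤ G.degree u + 1) :
    KDominatingSet G k (↑(Cᶜ) : Set V) := by
  intro u hu
  have huC : u ∈ C := by simpa using hu
  have hco : ((↑(Cᶜ) : Set V) ∩ G.neighborSet u) = ↑(G.neighborFinset u \ C) := by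
    ext x; simp [and_comm]
  rw [hco, Set.ncard_coe_finset]
  have hsub : G.neighborFinset u ∩ C ⊆ C.erase u := by
    intro x hx
    simp only [Finset.mem_inter] at hx
    exact Finset.mem_erase.mpr ⟨by rintro rfl; exact G.notMem_neighborFinset_self _ hx.1, hx.2⟩
  have h1 : (G.neighborFinset u ∩ C).card ≤ (C.erase u).card := Finset.card_le_card hsub
  have h2 : (G.neighborFinset u \ C).card + (G.neighborFinset u ∩ C).card
      = (G.neighborFinset u).card := Finset.card_sdiff_add_card_inter _ _
  have h3 : (C.erase u).card + 1 = C.card := Finset.card_erase_add_one huC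
  have h4 := h u huC
  have h5 : (G.neighborFinset u).card = G.degree u := G.card_neighborFinset_eq_degree u
  omega

theorem kCoalitionNumber_ge_minDegree {V : Type*} [Fintype V] (G : SimpleGraph V)
    [DecidableRel G.Adj] (hn : 2 ≤ Fintype.card V) (k : ℕ) (hk : 2 ≤ k) :
    (G.minDegree : ℤ) - k + 3 ≤ (kCoalitionNumber G k : ℤ) := by
  classical
  have hne : Nonempty V := Fintype.card_pos_iff.mp (by omega)
  obtain ⟨v, hv⟩ := G.exists_minimal_degree_vertex
  set δ := G.degree v with hδ
  have hmin : ∀ u, δ ≤ G.degree u := fun u => hv ▸ G.minDegree_le_degree u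
  set t := δ + 1 - k with ht
  obtain ⟨Tf, hTsub, hTcard⟩ := Finset.exists_subset_card_eq
    (s := G.neighborFinset v) (n := t) (by rw [G.card_neighborFinset_eq_degree]; omega)
  have hvT : v ∉ Tf := fun h => G.notMem_neighborFinset_self v (hTsub h)
  set Bf : Finset V := (insert v Tf)ᶜ with hBf
  have hCcard : (insert v Tf).card = t + 1 := by
    rw [Finset.card_insert_of_notMem hvT, hTcard]
  have hδlt : δ < Fintype.card V := G.degree_lt_card_verts v
  have hBcard : Bf.card = Fintype.card V - (t + 1) := by
    rw [hBf, Finset.card_compl, hCcard]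
  obtain ⟨w, hw⟩ : Bf.Nonempty := Finset.card_pos.mp (by omega)
  have hwv : w ≠ v := by
    intro h; rw [hBf] at hw; simp [h] at hw
  have hwT : w ∉ Tf := by
    intro h; rw [hBf] at hw; simp [h] at hw
  set Aset : Set V := {v} with hAset
  set Bset : Set V := ↑Bf with hBset
  set P : Finset (Set V) :=
    insert Bset (insert Aset (Tf.image fun u => ({u} : Set V))) with hP
  -- membership simp characterization
  have hmemP : ∀ A : Set V, A ∈ P ↔ A = Bset ∨ A = Aset ∨ ∃ u ∈ Tf, A = {u} := by
    intro A
    simp [hP, eq_comm]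
  -- distinctness
  have hAim : Aset ∉ Tf.image fun u => ({u} : Set V) := by
    simp only [Finset.mem_image, not_exists]
    rintro u ⟨hu, he⟩
    exact hvT (by rwa [Set.singleton_eq_singleton_iff.mp he] at hu)
  have hBA : Bset ≠ Aset := by
    intro h
    have : w ∈ Aset := h ▸ hw
    exact hwv this
  have hBim : Bset ∉ insert Aset (Tf.image fun u => ({u} : Set V)) := by
    simp only [Finset.mem_insert, Finset.mem_image, not_or, not_exists]
    refine ⟨hBA, ?_⟩
    rintro u ⟨hu, he⟩
    have : w ∈ ({u} : Set V) := he ▸ hw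
    exact hwT (by rw [Set.mem_singleton_iff.mp this]; exact hu)
  have hcardP : P.card = t + 2 := by
    rw [hP, Finset.card_insert_of_notMem hBim, Finset.card_insert_of_notMem hAim,
      Finset.card_image_of_injective _ Set.singleton_injective, hTcard]
  -- non-domination facts
  have hdv : G.degree v = δ := rfl
  have hnotA : ¬ KDominatingSet G k Aset := not_kdom_small G hk v hn
  have hnotB : ¬ KDominatingSet G k Bset := by
    intro hd
    have hvB : v ∉ Bset := by simp [hBset, hBf]
    have h1 := hd v hvB
    have he : Bset ∩ G.neighborSet v = ↑(G.neighborFinset v \ Tf) := by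
      ext x
      simp only [hBset, hBf, Set.mem_inter_iff, Finset.coe_compl, Set.mem_compl_iff,
        Finset.mem_coe, Finset.mem_insert, Finset.coe_sdiff, Set.mem_diff,
        mem_neighborFinset, mem_neighborSet]
      constructor
      · rintro ⟨h1, h2⟩; exact ⟨h2, fun h => h1 (Or.inr h)⟩
      · rintro ⟨h1, h2⟩
        refine ⟨?_, h1⟩
        rintro (rfl | h)
        · exact G.irrefl h1
        · exact h2 h
    rw [he, Set.ncard_coe_finset, Finset.card_sdiff_of_subset hTsub,
      G.card_neighborFinset_eq_degree, hdv, hTcard] at h1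
    omega
  -- union dominations
  have hAB : Aset ∪ Bset = ↑(Tfᶜ) := by
    ext x
    simp only [hAset, hBset, hBf, Set.mem_union, Set.mem_singleton_iff, Finset.coe_compl,
      Set.mem_compl_iff, Finset.mem_coe, Finset.mem_insert]
    constructor
    · rintro (rfl | h) h'
      · exact hvT h'
      · exact h (Or.inr h')
    · intro h
      by_cases hx : x = v
      · exact Or.inl hx
      · exact Or.inr (fun hc => by rcases hc with rfl | hc; exact hx rfl; exact h hc)
  have hdomAB : KDominatingSet G k (Aset ∪ Bset) := by
    rw [hAB]
    apply kdom_compl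
    intro u hu
    have h1 : 1 ≤ t := hTcard ▸ Finset.card_pos.mpr ⟨u, hu⟩
    have h2 := hmin u
    rw [hTcard]
    omega
  have hdomUB : ∀ u ∈ Tf, KDominatingSet G k (({u} : Set V) ∪ Bset) := by
    intro u hu
    have huv : u ≠ v := fun h => hvT (h ▸ hu)
    have hUB : ({u} : Set V) ∪ Bset = ↑((insert v (Tf.erase u))ᶜ) := by
      ext x
      simp only [hBset, hBf, Set.mem_union, Set.mem_singleton_iff, Finset.coe_compl,
        Set.mem_compl_iff, Finset.mem_coe, Finset.mem_insert, Finset.mem_erase]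
      constructor
      · rintro (rfl | h)
        · rintro (h1 | h2)
          · exact huv h1
          · exact h2.1 rfl
        · rintro (h1 | h2)
          · exact h (Or.inl h1)
          · exact h (Or.inr h2.2)
      · intro h
        by_cases hx : x = u
        · exact Or.inl hx
        · refine Or.inr ?_
          rintro (rfl | h2)
          · exact h (Or.inl rfl)
          · exact h (Or.inr ⟨hx, h2⟩)
    rw [hUB]
    apply kdom_compl
    intro x hx
    have h1 : 1 ≤ t := hTcard ▸ Finset.card_pos.mpr ⟨u, hu⟩
    have hvErase : v ∉ Tf.erase u := fun h => hvT (Finset.mem_of_mem_erase h)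
    have hcC : (insert v (Tf.erase u)).card = t := by
      rw [Finset.card_insert_of_notMem hvErase, Finset.card_erase_of_mem hu, hTcard]
      omega
    rw [hcC]
    have h2 := hmin x
    omega
  -- disjointness
  have hdisjB : ∀ x ∈ insert v Tf, Disjoint (({x} : Set V)) Bset := by
    intro x hx
    rw [Set.disjoint_singleton_left]
    simp only [hBset, hBf, Finset.coe_compl, Set.mem_compl_iff, Finset.mem_coe, not_not]
    exact hx
  have hpd : (P : Set (Set V)).PairwiseDisjoint id := by
    intro A hA B hB hne'
    rw [Finset.mem_coe, hmemP] at hA hB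
    obtain (rfl | rfl | ⟨a, ha, rfl⟩) := hA <;> obtain (rfl | rfl | ⟨b, hb, rfl⟩) := hB
    · exact absurd rfl hne'
    · exact (hdisjB v (Finset.mem_insert_self v Tf)).symm
    · exact (hdisjB b (Finset.mem_insert_of_mem hb)).symm
    · exact hdisjB v (Finset.mem_insert_self v Tf)
    · exact absurd rfl hne'
    · exact Set.disjoint_singleton.mpr (fun h => hvT (h ▸ hb))
    · exact hdisjB a (Finset.mem_insert_of_mem ha)
    · exact Set.disjoint_singleton.mpr (fun h => hvT (h.symm ▸ ha))
    · exact Set.disjoint_singleton.mpr (fun h => hne' (by rw [show a = b from h]))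
  -- union is everything
  have hunion : (⋃ A ∈ P, A) = (Set.univ : Set V) := by
    ext x
    simp only [Set.mem_iUnion, Set.mem_univ, iff_true, exists_prop]
    by_cases hx : x ∈ insert v Tf
    · rcases Finset.mem_insert.mp hx with rfl | hxT
      · exact ⟨Aset, (hmemP Aset).mpr (Or.inr (Or.inl rfl)), rfl⟩
      · exact ⟨{x}, (hmemP {x}).mpr (Or.inr (Or.inr ⟨x, hxT, rfl⟩)), rfl⟩
    · exact ⟨Bset, (hmemP Bset).mpr (Or.inl rfl),
        by simp only [hBset, hBf, Finset.coe_compl, Set.mem_compl_iff, Finset.mem_coe]; exact hx⟩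
  -- nonempty parts
  have hnonempty : ∀ A ∈ P, A.Nonempty := by
    intro A hA
    rw [hmemP] at hA
    obtain (rfl | rfl | ⟨a, ha, rfl⟩) := hA
    · exact ⟨w, Finset.mem_coe.mpr hw⟩
    · exact ⟨v, rfl⟩
    · exact ⟨a, rfl⟩
  -- coalition condition
  have hcond : ∀ A ∈ P, (KDominatingSet G k A ∧ A.ncard = k) ∨
      ∃ B ∈ P, B ≠ A ∧ KCoalition G k A B := by
    intro A hA
    rw [hmemP] at hA
    right
    obtain (rfl | rfl | ⟨a, ha, rfl⟩) := hA
    · exact ⟨Aset, (hmemP Aset).mpr (Or.inr (Or.inl rfl)), Ne.symm hBA,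
        (hdisjB v (Finset.mem_insert_self v Tf)).symm, hnotB, hnotA,
        by rw [Set.union_comm]; exact hdomAB⟩
    · exact ⟨Bset, (hmemP Bset).mpr (Or.inl rfl), hBA,
        hdisjB v (Finset.mem_insert_self v Tf), hnotA, hnotB, hdomAB⟩
    · refine ⟨Bset, (hmemP Bset).mpr (Or.inl rfl), ?_,
        hdisjB a (Finset.mem_insert_of_mem ha), not_kdom_small G hk a hn, hnotB,
        hdomUB a ha⟩
      intro h
      have : w ∈ ({a} : Set V) := h ▸ Finset.mem_coe.mpr hw
      exact hwT (by rw [Set.mem_singleton_iff.mp this]; exact ha)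
  have hKP : KCoalitionPartition G k P := ⟨hnonempty, hpd, hunion, hcond⟩
  -- conclude
  have hmem : (t + 2) ∈ {n | ∃ Q : Finset (Set V), KCoalitionPartition G k Q ∧ Q.card = n} :=
    ⟨P, hKP, hcardP⟩
  haveI : Fintype (Set V) := Fintype.ofFinite _
  have hle : t + 2 ≤ kCoalitionNumber G k := by
    apply le_csSup _ hmem
    refine ⟨Fintype.card (Set V), ?_⟩
    rintro n ⟨Q, -, rfl⟩
    exact Finset.card_le_univ Q
  rw [hv]
  omega
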